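/- arXiv:2502.19170 — 3 statements merged into one kernel-verified Lean document; each statement's English description precedes it below -/
import Mathlib

section
/- For all real S > 0, if S > 2/√3 then (2/9)·(1/S²) ≤ 1/2 − S/(2·√(4+S²)). -/
theorem high_snr_branch_dominated (S : ℝ) (hS : 0 < S) (h : S > 2 / Real.sqrt 3) :
    (2 / 9) * (1 / S ^ 2) ≤ 1 / 2 - S / (2 * Real.sqrt (4 + S ^ 2)) := by
  have h3 : Real.sqrt 3 > 0 := Real.sqrt_pos.mpr (by norm_num)
  have h3' : Real.sqrt 3 ^ 2 = 3 := Real.sq_sqrt (by norm_num)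
  have hS2 : 3 * S ^ 2 > 4 := by
    have : S * Real.sqrt 3 > 2 := by
      rw [gt_iff_lt, div_lt_iff₀ h3] at h; linarith
    nlinarith
  set r := Real.sqrt (4 + S ^ 2) with hrdef
  have hr2 : r ^ 2 = 4 + S ^ 2 := Real.sq_sqrt (by positivity)
  have hrpos : 0 < r := Real.sqrt_pos.mpr (by positivity)
  have key : r * S ≤ 8 * S ^ 2 - 4 := by
    nlinarith [sq_nonneg (8 * S ^ 2 - 4 - r * S), sq_nonneg (3 * S ^ 2 - 4), sq_nonneg S, mul_pos hrpos hS]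
  rw [← sub_nonneg]
  have expand : 1 / 2 - S / (2 * r) - 2 / 9 * (1 / S ^ 2) =
      (9 * S ^ 2 * r - 9 * S ^ 3 - 4 * r) / (18 * S ^ 2 * r) := by
    field_simp; ring
  rw [expand]
  apply div_nonneg _ (by positivity)
  have hX : (0:ℝ) < 9 * S ^ 2 - 4 := by nlinarith
  have hB : (0:ℝ) < r * (9 * S ^ 2 - 4) + 9 * S ^ 3 := by positivity
  have hAB : (0:ℝ) ≤ (r * (9 * S ^ 2 - 4)) ^ 2 - (9 * S ^ 3) ^ 2 := by
    nlinarith [sq_nonneg (3 * S ^ 2 - 4)]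
  nlinarith [hB, hAB, mul_pos hrpos hS]
end

section
/- Let Q be a positive integer, α ∈ [0,1), p ∈ (1/2,1] with α < 1 − 1/(2p), and let Z be a Binomial((1−α)Q, p) random variable (with (1−α)Q an integer). Then P(Z < Q/2) ≤ (1/(2√Q)) · √((1−α)p(1−p)) / ((1−α)p − 1/2). -/
lemma sum_w (x y : ℝ) (n : ℕ) :
    ∑ k ∈ Finset.range (n+1), (n.choose k : ℝ) * x^k * y^(n-k) = (x+y)^n := by
  rw [add_pow]
  exact Finset.sum_congr rfl fun k _ => by ring

lemma choose_key (m k : ℕ) :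
    ((k:ℝ)+1) * ((m+1).choose (k+1) : ℝ) = ((m:ℝ)+1) * (m.choose k : ℝ) := by
  have h : (m+1) * m.choose k = (m+1).choose (k+1) * (k+1) := Nat.add_one_mul_choose_eq m k
  have h' : ((m+1) * m.choose k : ℝ) = ((m+1).choose (k+1) * (k+1) : ℝ) := by
    exact_mod_cast congrArg (Nat.cast (R := ℝ)) h
  push_cast at h'
  linarith

lemma sum_kw (x y : ℝ) (n : ℕ) :
    ∑ k ∈ Finset.range (n+1), (k : ℝ) * ((n.choose k : ℝ) * x^k * y^(n-k))
      = n * x * (x+y)^(n-1) := by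
  cases n with
  | zero => simp
  | succ m =>
    rw [Finset.sum_range_succ']
    have step : ∀ k ∈ Finset.range (m+1),
        ((k+1:ℕ):ℝ) * (((m+1).choose (k+1) : ℝ) * x^(k+1) * y^(m+1-(k+1)))
          = ((m:ℝ)+1) * x * ((m.choose k : ℝ) * x^k * y^(m-k)) := by
      intro k _
      rw [Nat.succ_sub_succ]
      push_cast
      linear_combination (x^(k+1) * y^(m-k)) * choose_key m k
    rw [Finset.sum_congr rfl step, ← Finset.mul_sum, sum_w]
    simp

lemma sum_kkw (x y : ℝ) (n : ℕ) :
    ∑ k ∈ Finset.range (n+1), (k : ℝ) * ((k:ℝ)-1) * ((n.choose k : ℝ) * x^k * y^(n-k))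
      = n * ((n:ℝ)-1) * x^2 * (x+y)^(n-2) := by
  match n with
  | 0 => simp
  | 1 => simp [Finset.sum_range_succ]
  | (m+2) =>
    rw [Finset.sum_range_succ', Finset.sum_range_succ']
    have step : ∀ k ∈ Finset.range (m+1),
        ((k+1+1:ℕ):ℝ) * (((k+1+1:ℕ):ℝ)-1) * (((m+2).choose (k+1+1) : ℝ) * x^(k+1+1) * y^(m+2-(k+1+1)))
          = ((m:ℝ)+2) * ((m:ℝ)+1) * x^2 * ((m.choose k : ℝ) * x^k * y^(m-k)) := by
      intro k _
      have hy : m+2-(k+1+1) = m - k := by omega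
      rw [hy]
      have h1 := choose_key (m+1) (k+1)
      have h2 := choose_key m k
      push_cast at h1 ⊢
      linear_combination ((k:ℝ)+1) * (x^(k+2) * y^(m-k)) * h1
        + ((m:ℝ)+2) * (x^(k+2) * y^(m-k)) * h2
    rw [Finset.sum_congr rfl step, ← Finset.mul_sum, sum_w]
    push_cast
    ring_nf

theorem binomial_vote_failure_bound (Q : ℕ) (hQ : 0 < Q) (α p : ℝ)
    (hα0 : 0 ≤ α) (hα1 : α < 1) (hp : 1 / 2 < p) (hp1 : p ≤ 1)
    (hthr : α < 1 - 1 / (2 * p))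
    (n : ℕ) (hn : (n : ℝ) = (1 - α) * Q) :
    (((PMF.binomial (Real.toNNReal p) (by simpa using hp1) n).toMeasure
        {k | (k : ℝ) < Q / 2}).toReal ≤
      (1 / (2 * Real.sqrt Q)) * Real.sqrt ((1 - α) * p * (1 - p)) / ((1 - α) * p - 1 / 2)) := by
  have hp0 : 0 < p := by linarith
  have hq0 : 0 ≤ 1 - p := by linarith
  have hQ0 : (0:ℝ) < Q := by exact_mod_cast hQ
  have hd : 0 < (1 - α) * p - 1 / 2 := by
    have key : p * (1/(2*p)) = 1/2 := by field_simp
    nlinarith [mul_pos hp0 (by linarith : (0:ℝ) < (1-α) - 1/(2*p))]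
  set σ : ℝ := Real.sqrt ((n:ℝ) * p * (1 - p)) with hσdef
  have hσ0 : 0 ≤ σ := Real.sqrt_nonneg _
  have hσsq : σ^2 = (n:ℝ) * p * (1 - p) := by
    rw [hσdef, Real.sq_sqrt]
    positivity
  set t : ℝ := (n:ℝ) * p - Q / 2 with htdef
  have ht0 : 0 < t := by rw [htdef, hn]; nlinarith
  set c : ℝ := (n:ℝ) * p + σ with hcdef
  -- the real weight function
  set w : ℕ → ℝ := fun k => (n.choose k : ℝ) * p^k * (1-p)^(n-k) with hw
  have hw0 : ∀ k, 0 ≤ w k := fun k => by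
    have : (0:ℝ) ≤ (1-p)^(n-k) := pow_nonneg hq0 _
    positivity
  -- step 1: the measure equals a real sum
  have hmeas : (((PMF.binomial (Real.toNNReal p)
        (by simpa using hp1) n).toMeasure
        {k | (k : ℝ) < Q / 2}).toReal
      = ∑ k ∈ Finset.range (n+1), (if (k:ℝ) < Q/2 then w k else 0)) := by
    rw [PMF.toMeasure_apply_fintype]
    rw [ENNReal.toReal_sum (fun a _ => by
      refine ne_of_lt (lt_of_le_of_lt ?_ ENNReal.one_lt_top)
      refine le_trans (Set.indicator_le_self _ _ a) ?_
      exact PMF.coe_le_one _ a)]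
    rw [← Fin.sum_univ_eq_sum_range
      (fun k => (if (k:ℝ) < Q/2 then w k else 0))]
    refine Finset.sum_congr rfl fun i _ => ?_
    have hval : ((PMF.binomial (Real.toNNReal p)
        (by simpa using hp1) n) i).toReal = w i.val := by
      rw [PMF.binomial_apply, Fin.val_last, ← ENNReal.coe_one, ← ENNReal.coe_sub]
      rw [ENNReal.toReal_mul, ENNReal.toReal_mul, ENNReal.toReal_pow, ENNReal.toReal_pow,
        ENNReal.coe_toReal, ENNReal.coe_toReal, ENNReal.toReal_natCast,
        NNReal.coe_sub (Real.toNNReal_le_one.mpr hp1), Real.coe_toNNReal _ (le_of_lt hp0),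
        NNReal.coe_one]
      rw [hw]; ring
    by_cases hmem : ((i:ℕ):ℝ) < (Q:ℝ)/2
    · rw [Set.indicator_of_mem (by exact hmem), hval, if_pos hmem]
    · rw [Set.indicator_of_notMem (by exact hmem), if_neg hmem]
      simp
  rw [hmeas]
  -- step 2: bound the indicator sum by the quadratic weight sum
  have hst : 0 < σ + t := by linarith
  have hbound : ∑ k ∈ Finset.range (n+1), (if (k:ℝ) < Q/2 then w k else 0)
      ≤ ∑ k ∈ Finset.range (n+1), w k * ((c - k)/(σ + t))^2 := by
    refine Finset.sum_le_sum fun k _ => ?_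
    by_cases hk : (k:ℝ) < Q/2
    · rw [if_pos hk]
      have hck : σ + t < c - k := by
        rw [hcdef, htdef]; linarith
      have h1 : 1 ≤ ((c - k)/(σ + t))^2 := by
        rw [one_le_sq_iff_one_le_abs]
        rw [abs_of_pos (div_pos (by linarith) hst)]
        rw [le_div_iff₀ hst]; linarith
      nlinarith [hw0 k, h1]
    · rw [if_neg hk]
      positivity
  -- step 3: compute the quadratic weight sum
  have e1 : ∑ k ∈ Finset.range (n+1), w k = 1 := by
    rw [hw]
    simp only []
    rw [sum_w]
    norm_num
  have e2 : ∑ k ∈ Finset.range (n+1), (k:ℝ) * w k = (n:ℝ) * p := by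
    rw [hw]
    have := sum_kw p (1-p) n
    simp only [show p + (1-p) = 1 by ring, one_pow, mul_one] at this
    rw [← this]
  have e3 : ∑ k ∈ Finset.range (n+1), (k:ℝ) * ((k:ℝ)-1) * w k = (n:ℝ) * ((n:ℝ)-1) * p^2 := by
    rw [hw]
    have := sum_kkw p (1-p) n
    simp only [show p + (1-p) = 1 by ring, one_pow, mul_one] at this
    rw [← this]
  have e4 : ∑ k ∈ Finset.range (n+1), w k * (c - k)^2 = 2 * σ^2 := by
    have expand : ∀ k ∈ Finset.range (n+1), w k * (c - k)^2
        = (k:ℝ) * ((k:ℝ)-1) * w k + (1 - 2*c) * ((k:ℝ) * w k) + c^2 * w k := fun k _ => by ring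
    rw [Finset.sum_congr rfl expand]
    rw [Finset.sum_add_distrib, Finset.sum_add_distrib, ← Finset.mul_sum, ← Finset.mul_sum,
      e1, e2, e3]
    rw [hcdef]
    linear_combination -hσsq
  have e5 : ∑ k ∈ Finset.range (n+1), w k * ((c - k)/(σ + t))^2 = 2 * σ^2 / (σ + t)^2 := by
    have : ∀ k ∈ Finset.range (n+1), w k * ((c - k)/(σ + t))^2
        = w k * (c - k)^2 / (σ + t)^2 := fun k _ => by rw [div_pow]; ring
    rw [Finset.sum_congr rfl this, ← Finset.sum_div, e4]
  -- step 4: final arithmetic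
  have hfinal : 2 * σ^2 / (σ + t)^2 ≤ σ / (2 * t) := by
    rw [div_le_div_iff₀ (by positivity) (by positivity)]
    nlinarith [mul_nonneg hσ0 (sq_nonneg (σ - t))]
  have hrhs : σ / (2 * t) = (1 / (2 * Real.sqrt Q)) * Real.sqrt ((1 - α) * p * (1 - p))
      / ((1 - α) * p - 1 / 2) := by
    have hσeq : σ = Real.sqrt Q * Real.sqrt ((1 - α) * p * (1 - p)) := by
      rw [hσdef, hn, ← Real.sqrt_mul (le_of_lt hQ0)]
      congr 1; ring
    have hteq : t = (Q:ℝ) * ((1 - α) * p - 1/2) := by rw [htdef, hn]; ring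
    have hsq : Real.sqrt Q * Real.sqrt Q = (Q:ℝ) := Real.mul_self_sqrt (le_of_lt hQ0)
    have hsQ0 : 0 < Real.sqrt Q := Real.sqrt_pos.mpr hQ0
    have key : ∀ s A d : ℝ, 0 < s → 0 < d → s * s = (Q:ℝ) →
        s * A / (2 * ((Q:ℝ) * d)) = 1/(2*s) * A / d := by
      intro s A d hs hdd hss
      rw [← hss]
      field_simp
    rw [hσeq, hteq]
    exact key _ _ _ hsQ0 hd hsq
  calc ∑ k ∈ Finset.range (n+1), (if (k:ℝ) < Q/2 then w k else 0)
      ≤ ∑ k ∈ Finset.range (n+1), w k * ((c - k)/(σ + t))^2 := hbound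
    _ = 2 * σ^2 / (σ + t)^2 := e5
    _ ≤ σ / (2 * t) := hfinal
    _ = _ := hrhs
end

section
/- Let p ∈ (1/2, 1] and α ∈ [0, 1 − 1/(2p)). For Z ~ Binomial(n, p) with n = (1−α)Q honest workers out of Q total, the probability that the majority vote fails, P(Z < Q/2), tends to 0 as Q → ∞ at rate O(1/√Q); specifically P(Z < Q/2) ≤ C(α,p)/√Q with C(α,p) = √((1−α)p(1−p))/(2((1−α)p − 1/2)). -/
lemma vote_aux_final (d s r : ℝ) (hs : 0 ≤ s) (hr : 0 ≤ r) :
    s^2*r^2*(2*d*r) ≤ s*((d*r^2)^2 + s^2*r^2) := by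
  nlinarith [mul_nonneg (mul_nonneg (mul_nonneg hr hr) hs) (sq_nonneg (d*r - s))]

set_option maxHeartbeats 1000000 in
theorem vote_failure_decay_rate (p α : ℝ) (hp : 1 / 2 < p) (hp1 : p ≤ 1)
    (hα0 : 0 ≤ α) (hα1 : α < 1 - 1 / (2 * p)) :
    ∀ Q : ℕ, 0 < Q → ∀ n : ℕ, (n : ℝ) = (1 - α) * Q →
      (((PMF.binomial (Real.toNNReal p) (by simpa using Real.toNNReal_le_one.mpr hp1) n).toMeasure
          {k | (k : ℝ) < Q / 2}).toReal ≤
        (Real.sqrt ((1 - α) * p * (1 - p)) / (2 * ((1 - α) * p - 1 / 2))) / Real.sqrt Q) := by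
  intro Q hQ n hn
  have hp' : (0:ℝ) < p := by linarith
  have hp0 : (0:ℝ) ≤ p := hp'.le
  have hq0 : (0:ℝ) ≤ 1 - p := by linarith
  have h2p : (0:ℝ) < 2 * p := by linarith
  have hinv : 1 / (2*p) * (2*p) = 1 := by field_simp
  have h1α : 0 < 1 - α := by
    have : 0 < 1 / (2*p) := by positivity
    linarith
  have hd : 0 < (1-α)*p - 1/2 := by
    nlinarith [mul_lt_mul_of_pos_right hα1 h2p]
  have hQ0 : (0:ℝ) < Q := by exact_mod_cast hQ
  obtain ⟨f, hf⟩ : ∃ f : ℕ → ℝ, f = fun k => (n.choose k : ℝ) * p^k * (1-p)^(n-k) := ⟨_, rfl⟩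
  have hf0 : ∀ k, 0 ≤ f k := fun k => by rw [hf]; positivity
  -- Step A : measure as a real finite sum
  have hA : ((PMF.binomial (Real.toNNReal p)
        (by simpa using Real.toNNReal_le_one.mpr hp1) n).toMeasure
        {k | (k : ℝ) < Q / 2}).toReal
      = ∑ k ∈ (Finset.range (n+1)).filter (fun k : ℕ => (k:ℝ) < (Q:ℝ)/2), f k := by
    rw [PMF.toMeasure_apply_fintype]
    rw [ENNReal.toReal_sum
      (by intro a _; exact ((Set.indicator_le_self _ _ a).trans_lt (PMF.apply_lt_top _ _)).ne)]
    rw [Finset.sum_filter, ← Fin.sum_univ_eq_sum_range]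
    congr 1
    ext k
    rw [Set.indicator_apply]
    simp only [Set.mem_setOf_eq]
    split_ifs with hk
    · rw [hf, PMF.binomial_apply, Fin.val_last]
      rw [ENNReal.toReal_mul, ENNReal.toReal_mul, ENNReal.toReal_pow, ENNReal.toReal_pow,
        ENNReal.toReal_sub_of_le (by simpa using Real.toNNReal_le_one.mpr hp1) ENNReal.one_ne_top]
      simp [Real.coe_toNNReal _ hp0]
      ring
    · simp
  -- moments of the binomial
  have e : ∀ ν, Polynomial.eval p (bernsteinPolynomial ℝ n ν) = f ν := by
    intro ν; simp [bernsteinPolynomial, hf]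
  have h0 : ∑ ν ∈ Finset.range (n+1), f ν = 1 := by
    have := bernsteinPolynomial.sum ℝ n
    apply_fun Polynomial.aeval p at this
    simpa [e] using this
  have h1 : ∑ ν ∈ Finset.range (n+1), (ν:ℝ) * f ν = n * p := by
    have := bernsteinPolynomial.sum_smul ℝ n
    apply_fun Polynomial.aeval p at this
    simpa [e, Finset.mul_sum] using this
  have h2 : ∑ ν ∈ Finset.range (n+1), ((n:ℝ)*p - ν)^2 * f ν = n * p * (1-p) := by
    have := bernsteinPolynomial.variance ℝ n
    apply_fun Polynomial.aeval p at this
    simpa [e, sub_sq, Finset.mul_sum] using this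
  -- Cantelli setup
  obtain ⟨t, ht_def⟩ : ∃ t : ℝ, t = (n:ℝ)*p - (Q:ℝ)/2 := ⟨_, rfl⟩
  have hteq : t = ((1-α)*p - 1/2) * Q := by rw [ht_def, hn]; ring
  have ht0 : 0 < t := by rw [hteq]; positivity
  obtain ⟨V, hV_def⟩ : ∃ V : ℝ, V = (n:ℝ)*p*(1-p) := ⟨_, rfl⟩
  have hV0 : 0 ≤ V := by rw [hV_def, hn]; positivity
  obtain ⟨u, hu_def⟩ : ∃ u : ℝ, u = V / t := ⟨_, rfl⟩
  have hu0 : 0 ≤ u := hu_def ▸ div_nonneg hV0 ht0.le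
  have htu : 0 < t + u := by linarith
  have hsum : ∑ k ∈ Finset.range (n+1), ((n:ℝ)*p - k + u)^2 * f k = V + u^2 := by
    have expand : ∀ k ∈ Finset.range (n+1), ((n:ℝ)*p - k + u)^2 * f k
        = ((n:ℝ)*p - k)^2 * f k + (2*u*((n:ℝ)*p)) * f k - (2*u) * ((k:ℝ) * f k)
          + u^2 * f k := fun k _ => by ring
    rw [Finset.sum_congr rfl expand, Finset.sum_add_distrib, Finset.sum_sub_distrib,
      Finset.sum_add_distrib, ← Finset.mul_sum, ← Finset.mul_sum, ← Finset.mul_sum,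
      h0, h1, h2, hV_def]
    ring
  -- Cantelli bound
  have hP : ∑ k ∈ (Finset.range (n+1)).filter (fun k : ℕ => (k:ℝ) < (Q:ℝ)/2), f k
      ≤ (V + u^2) / (t+u)^2 := by
    calc ∑ k ∈ (Finset.range (n+1)).filter (fun k : ℕ => (k:ℝ) < (Q:ℝ)/2), f k
        ≤ ∑ k ∈ (Finset.range (n+1)).filter (fun k : ℕ => (k:ℝ) < (Q:ℝ)/2),
            ((n:ℝ)*p - k + u)^2 * f k / (t+u)^2 := by
          refine Finset.sum_le_sum fun k hk => ?_
          have hk' : (k:ℝ) < (Q:ℝ)/2 := (Finset.mem_filter.1 hk).2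
          have hle : t + u ≤ (n:ℝ)*p - k + u := by rw [ht_def]; linarith
          have h2le : (t+u)^2 ≤ ((n:ℝ)*p - k + u)^2 := by nlinarith
          rw [le_div_iff₀ (by positivity)]
          exact (mul_le_mul_of_nonneg_left h2le (hf0 k)).trans_eq (mul_comm _ _)
      _ ≤ ∑ k ∈ Finset.range (n+1), ((n:ℝ)*p - k + u)^2 * f k / (t+u)^2 := by
          refine Finset.sum_le_sum_of_subset_of_nonneg (Finset.filter_subset _ _)
            fun k _ _ => ?_
          have := hf0 k
          positivity
      _ = (V + u^2) / (t+u)^2 := by rw [← Finset.sum_div, hsum]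
  rw [hA]
  refine hP.trans ?_
  have key : (V + u^2) / (t+u)^2 = V / (t^2 + V) := by
    rw [hu_def]
    have ht' : t ≠ 0 := ht0.ne'
    have hpos : 0 < t^2 + V := by positivity
    field_simp
  rw [key]
  obtain ⟨s, hs_def⟩ : ∃ s : ℝ, s = Real.sqrt ((1-α)*p*(1-p)) := ⟨_, rfl⟩
  rw [← hs_def]
  have hs0 : 0 ≤ s := hs_def ▸ Real.sqrt_nonneg _
  have hs2 : s^2 = (1-α)*p*(1-p) := by rw [hs_def]; exact Real.sq_sqrt (by positivity)
  have hVeq : V = s^2 * Q := by rw [hV_def, hs2, hn]; ring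
  have hrQ : Real.sqrt Q ^ 2 = Q := Real.sq_sqrt hQ0.le
  have hrQ0 : 0 < Real.sqrt Q := Real.sqrt_pos.2 hQ0
  obtain ⟨r, hr⟩ : ∃ r : ℝ, r = Real.sqrt Q := ⟨_, rfl⟩
  have hr0 : 0 < r := hr ▸ hrQ0
  have hQr : (Q:ℝ) = r^2 := by rw [hr]; exact hrQ.symm
  rw [div_div, ← hr]
  rw [div_le_div_iff₀ (add_pos_of_pos_of_nonneg (pow_pos ht0 2) hV0)
    (mul_pos (by linarith : (0:ℝ) < 2*((1-α)*p-1/2)) hr0)]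
  rw [hVeq, hteq, hQr]
  have hfin := vote_aux_final ((1-α)*p-1/2) s r hs0 hr0.le
  linarith only [hfin]
end
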